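/- Let m ≥ 2 and let Γ be a subgroup of Perm(Fin m) acting transitively on Fin m. Let a : Fin m → ℕ with a(i) ≥ 2 for all i. Suppose N ∈ ℕ is such that every m-edge-colouring of the complete graph on N vertices contains, for some i ∈ Fin m, a monochromatic K_{a(i)−1} of colour i. Then every m-edge-colouring of the complete graph on N+1 vertices is Γ-switch equivalent to a colouring containing, for some i ∈ Fin m, a monochromatic K_{a(i)} of colour i. -/

import Mathlib

open scoped Classical in
/-- Switch the edge-colouring `c` at vertex `v` with permutation `π`: every edge
incident with `v` has its colour replaced by its image under `π`. -/
noncomputable def switchAt {V K : Type*} (c : Sym2 V → K) (π : Equiv.Perm K) (v : V) :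
    Sym2 V → K :=
  fun s => if v ∈ s then π (c s) else c s

/-- Two colourings are `Γ`-switch equivalent if one is obtained from the other by a
finite sequence of switches at vertices with permutations from `Γ`. -/
def SwitchEquiv {V K : Type*} (Γ : Subgroup (Equiv.Perm K)) (c c' : Sym2 V → K) : Prop :=
  Relation.ReflTransGen (fun d d' => ∃ π ∈ Γ, ∃ v : V, d' = switchAt d π v) c c'

/-- The colouring `c` contains a monochromatic complete graph on `t` vertices of colour `i`. -/
def HasMonoK {V K : Type*} (c : Sym2 V → K) (i : K) (t : ℕ) : Prop :=
  ∃ S : Finset V, S.card = t ∧ ∀ x ∈ S, ∀ y ∈ S, x ≠ y → c s(x, y) = i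

noncomputable def chainAux {m N : ℕ} (σ : Fin m → Equiv.Perm (Fin m))
    (c : Sym2 (Fin (N + 1)) → Fin m) : ℕ → Sym2 (Fin (N + 1)) → Fin m
  | 0 => c
  | t + 1 =>
    if h : t < N then
      switchAt (chainAux σ c t)
        (σ (chainAux σ c t s(⟨t, h.trans (Nat.lt_succ_self N)⟩, Fin.last N)))
        ⟨t, h.trans (Nat.lt_succ_self N)⟩
    else chainAux σ c t

lemma chainAux_equiv {m N : ℕ} (Γ : Subgroup (Equiv.Perm (Fin m)))
    (σ : Fin m → Equiv.Perm (Fin m)) (hσ : ∀ k, σ k ∈ Γ)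
    (c : Sym2 (Fin (N + 1)) → Fin m) (t : ℕ) :
    SwitchEquiv Γ c (chainAux σ c t) := by
  induction t with
  | zero => exact Relation.ReflTransGen.refl
  | succ t ih =>
    unfold chainAux
    split
    · exact Relation.ReflTransGen.tail ih ⟨_, hσ _, _, rfl⟩
    · exact ih

lemma chainAux_edge {m N : ℕ} (σ : Fin m → Equiv.Perm (Fin m))
    (c : Sym2 (Fin (N + 1)) → Fin m) (z : Fin m) (hz : ∀ k, σ k k = z) :
    ∀ t, ∀ j, (hj : j < N) → j < t →
      chainAux σ c t s(⟨j, hj.trans (Nat.lt_succ_self N)⟩, Fin.last N) = z := by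
  intro t
  induction t with
  | zero => intro j hj h; omega
  | succ t ih =>
    intro j hj hjt
    unfold chainAux
    rcases Nat.lt_or_ge t N with htN | htN
    · rw [dif_pos htN]
      rcases Nat.lt_or_ge j t with h | h
      · unfold switchAt
        rw [if_neg (by simp only [Sym2.mem_iff, not_or, Fin.ext_iff, Fin.val_last]; omega)]
        exact ih j hj h
      · have hjt' : j = t := by omega
        subst hjt'
        unfold switchAt
        rw [if_pos (Sym2.mem_mk_left _ _)]
        exact hz _
    · rw [dif_neg (by omega)]
      exact ih j hj (by omega)

theorem stmt8 (m : ℕ) (hm : 2 ≤ m) (Γ : Subgroup (Equiv.Perm (Fin m)))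
    (htrans : ∀ i j : Fin m, ∃ π ∈ Γ, π i = j)
    (a : Fin m → ℕ) (ha : ∀ i, 2 ≤ a i)
    (N : ℕ) (hN : ∀ c : Sym2 (Fin N) → Fin m, ∃ i : Fin m, HasMonoK c i (a i - 1))
    (c : Sym2 (Fin (N + 1)) → Fin m) :
    ∃ c', SwitchEquiv Γ c c' ∧ ∃ i : Fin m, HasMonoK c' i (a i) := by
  classical
  set z : Fin m := ⟨0, by omega⟩ with hzdef
  -- choose for each colour k a permutation in Γ sending k to z
  choose σ hσΓ hσz using fun k => htrans k z
  set c₁ := chainAux σ c N with hc₁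
  have hequiv₁ : SwitchEquiv Γ c c₁ := chainAux_equiv Γ σ hσΓ c N
  have hedge : ∀ j : Fin N, c₁ s(Fin.castSucc j, Fin.last N) = z := by
    intro j
    have := chainAux_edge σ c z hσz N j.1 j.2 j.2
    convert this using 3
    rfl
  -- restrict to the first N vertices
  set c₂ : Sym2 (Fin N) → Fin m := fun s => c₁ (Sym2.map Fin.castSucc s) with hc₂
  obtain ⟨i, S, hScard, hSmono⟩ := hN c₂
  obtain ⟨π, hπΓ, hπz⟩ := htrans z i
  refine ⟨switchAt c₁ π (Fin.last N),
    Relation.ReflTransGen.tail hequiv₁ ⟨π, hπΓ, _, rfl⟩, i, ?_⟩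
  refine ⟨insert (Fin.last N) (S.image Fin.castSucc), ?_, ?_⟩
  · rw [Finset.card_insert_of_notMem, Finset.card_image_of_injective _
      (Fin.castSucc_injective N), hScard]
    · have := ha i; omega
    · simp only [Finset.mem_image]
      rintro ⟨x, hx, hxe⟩
      exact (Fin.castSucc_lt_last x).ne hxe
  · intro x hx y hy hxy
    simp only [Finset.mem_insert, Finset.mem_image] at hx hy
    have hlast_ne : ∀ u : Fin N, Fin.castSucc u ≠ Fin.last N :=
      fun u => (Fin.castSucc_lt_last u).ne
    rcases hx with rfl | ⟨x', hx', rfl⟩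
    · rcases hy with rfl | ⟨y', hy', rfl⟩
      · exact absurd rfl hxy
      · show switchAt c₁ π (Fin.last N) s(Fin.last N, Fin.castSucc y') = i
        unfold switchAt
        rw [if_pos (by simp), Sym2.eq_swap, hedge y', hπz]
    · rcases hy with rfl | ⟨y', hy', rfl⟩
      · show switchAt c₁ π (Fin.last N) s(Fin.castSucc x', Fin.last N) = i
        unfold switchAt
        rw [if_pos (by simp), hedge x', hπz]
      · show switchAt c₁ π (Fin.last N) s(Fin.castSucc x', Fin.castSucc y') = i
        unfold switchAt
        rw [if_neg (by simp [Sym2.mem_iff, (hlast_ne x').symm, (hlast_ne y').symm,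
          Ne.symm (hlast_ne x'), Ne.symm (hlast_ne y')])]
        have hx'y' : x' ≠ y' := fun h => hxy (by rw [h])
        have := hSmono x' hx' y' hy' hx'y'
        rw [hc₂] at this
        simpa [Sym2.map_pair_eq] using this
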